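/- Let M > 0 and β ≥ 1 + M/(8π). Then the repulsive free energy F⁺_β is bounded from below on the set of admissible functions f on ℝ² with ∫_{ℝ²} f dx = M: there is a constant C ∈ ℝ such that F⁺_β[f] ≥ C for all such f. -/
import Mathlib


open MeasureTheory Real Filter

noncomputable section

/-- The Euclidean plane ℝ². -/
abbrev E2 := EuclideanSpace ℝ (Fin 2)

/-- The probability density μ(x) = 1/(π (1+|x|²)²) on ℝ². -/
def mu2 (x : E2) : ℝ := 1 / (π * (1 + ‖x‖ ^ 2) ^ 2)

/-- The external potential V(x) = −log μ(x) = 2 log(1+|x|²) + log π. -/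
def Vpot (x : E2) : ℝ := 2 * Real.log (1 + ‖x‖ ^ 2) + Real.log π

/-- A function f on ℝ² is admissible if it is measurable, nonnegative a.e., integrable,
and ∫ f |log f|, ∫ V f and ∬ f(x) f(y) |log|x−y|| are all finite. -/
def Admissible (f : E2 → ℝ) : Prop :=
  Measurable f ∧ (∀ᵐ x : E2, 0 ≤ f x) ∧ Integrable f ∧
  Integrable (fun x => f x * |Real.log (f x)|) ∧
  Integrable (fun x => Vpot x * f x) ∧
  Integrable (fun p : E2 × E2 => f p.1 * f p.2 * |Real.log ‖p.1 - p.2‖|)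

/-- The repulsive free energy F⁺_β. -/
def Fplus (β : ℝ) (f : E2 → ℝ) : ℝ :=
  (∫ x, f x * Real.log (f x)) + β * (∫ x, Vpot x * f x)
    - (1 / (4 * π)) * ∫ p : E2 × E2, f p.1 * f p.2 * Real.log ‖p.1 - p.2‖

/-- The attractive free energy F⁻_β. -/
def Fminus (β : ℝ) (f : E2 → ℝ) : ℝ :=
  (∫ x, f x * Real.log (f x)) + β * (∫ x, Vpot x * f x)
    + (1 / (4 * π)) * ∫ p : E2 × E2, f p.1 * f p.2 * Real.log ‖p.1 - p.2‖

lemma mu2_pos (x : E2) : 0 < mu2 x := by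
  unfold mu2; positivity

lemma log_mu2 (x : E2) : Real.log (mu2 x) = -Vpot x := by
  unfold mu2 Vpot
  rw [one_div, Real.log_inv, Real.log_mul Real.pi_ne_zero (by positivity),
      Real.log_pow]
  push_cast; ring

lemma Vpot_nonneg (x : E2) : 0 ≤ Vpot x := by
  unfold Vpot
  have h1 : 0 ≤ Real.log (1 + ‖x‖ ^ 2) := Real.log_nonneg (by nlinarith [sq_nonneg ‖x‖])
  have h2 : 0 ≤ Real.log π := Real.log_nonneg (by linarith [Real.pi_gt_three])
  linarith

lemma mu2_integrable : Integrable mu2 := by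
  have h : ((Module.finrank ℝ E2 : ℝ)) < 4 := by
    simp [finrank_euclideanSpace_fin]; norm_num
  refine ((integrable_one_add_norm (E := E2) h).const_mul (4/π)).mono' ?_ ?_
  · exact Measurable.aestronglyMeasurable (by unfold mu2; fun_prop)
  · filter_upwards with x
    have ht : (0:ℝ) ≤ ‖x‖ := norm_nonneg x
    have hr : ((1:ℝ) + ‖x‖) ^ (-(4:ℝ)) = ((1 + ‖x‖) ^ (4:ℕ))⁻¹ := by
      rw [← Real.rpow_natCast (1 + ‖x‖) 4, ← Real.rpow_neg (by positivity)]
      norm_num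
    rw [Real.norm_eq_abs, abs_of_pos (mu2_pos x), hr]
    unfold mu2
    have key : (1 + ‖x‖)^4 ≤ 4 * (1 + ‖x‖^2)^2 := by nlinarith [sq_nonneg (1 - ‖x‖)]
    have h2 : 4/π * ((1 + ‖x‖) ^ (4:ℕ))⁻¹ = 4 / (π * (1 + ‖x‖)^4) := by
      field_simp
    rw [h2, div_le_div_iff₀ (by positivity) (by positivity)]
    nlinarith [Real.pi_pos, sq_nonneg (1 + ‖x‖^2)]

lemma mul_log_ge (a b : ℝ) (ha : 0 ≤ a) (hb : 0 < b) :
    a * Real.log b + a - b ≤ a * Real.log a := by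
  rcases eq_or_lt_of_le ha with h|h
  · simp [← h]; linarith
  · have h1 : Real.log (b / a) ≤ b / a - 1 := Real.log_le_sub_one_of_pos (by positivity)
    have h2 : Real.log (b/a) = Real.log b - Real.log a := Real.log_div hb.ne' h.ne'
    rw [h2] at h1
    have h3 := mul_le_mul_of_nonneg_left h1 h.le
    have hba : a * (b / a) = b := by field_simp
    nlinarith

lemma log_sub_le (x y : E2) :
    Real.log ‖x - y‖ ≤ Real.log (1 + ‖x‖) + Real.log (1 + ‖y‖) := by
  have hx : (0:ℝ) < 1 + ‖x‖ := by positivity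
  have hy : (0:ℝ) < 1 + ‖y‖ := by positivity
  have h1 : ‖x - y‖ ≤ (1 + ‖x‖) * (1 + ‖y‖) := by
    have := norm_sub_le x y
    nlinarith [norm_nonneg x, norm_nonneg y]
  have h2 : Real.log ‖x - y‖ ≤ Real.log ((1+‖x‖)*(1+‖y‖)) := by
    rcases eq_or_lt_of_le (norm_nonneg (x-y)) with h|h
    · rw [← h, Real.log_zero]
      exact Real.log_nonneg (by nlinarith [norm_nonneg x, norm_nonneg y])
    · exact Real.log_le_log h h1
  rw [Real.log_mul hx.ne' hy.ne'] at h2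
  exact h2

lemma log_one_add_norm_le (z : E2) :
    Real.log (1 + ‖z‖) ≤ (1/4) * Vpot z + ((1/2)*Real.log 2 - (1/4)*Real.log π) := by
  have ht : (0:ℝ) ≤ ‖z‖ := norm_nonneg z
  have h : (1+‖z‖)^2 ≤ 2*(1+‖z‖^2) := by nlinarith [sq_nonneg (1 - ‖z‖)]
  have h1 : Real.log ((1+‖z‖)^2) ≤ Real.log (2*(1+‖z‖^2)) :=
    Real.log_le_log (by positivity) h
  rw [Real.log_pow, Real.log_mul two_ne_zero (by positivity)] at h1
  unfold Vpot
  push_cast at h1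
  linarith

/-- The repulsive free energy F⁺_β is bounded from below when β ≥ 1 + M/(8π). -/
theorem Fplus_bounded_below (M β : ℝ) (hM : 0 < M) (hβ : β ≥ 1 + M / (8 * π)) :
    ∃ C : ℝ, ∀ f : E2 → ℝ, Admissible f → (∫ x, f x) = M → C ≤ Fplus β f := by
  have hπ : (0:ℝ) < π := Real.pi_pos
  set c₂ : ℝ := (1/2)*Real.log 2 - (1/4)*Real.log π with hc2
  refine ⟨M - (∫ x, mu2 x) - 1/(2*π) * c₂ * M^2, ?_⟩
  rintro f ⟨hmeas, hpos, hint, hflog, hVf, hprod⟩ hmass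
  set g : E2 → ℝ := fun x => (1/4) * Vpot x + c₂ with hg
  -- basic integrability
  have hfl : Integrable (fun x => f x * Real.log (f x)) := by
    refine hflog.mono' (hmeas.mul (Real.measurable_log.comp hmeas)).aestronglyMeasurable ?_
    filter_upwards [hpos] with x hx
    rw [Real.norm_eq_abs, abs_mul, abs_of_nonneg hx]
  have hfg : Integrable (fun x => f x * g x) := by
    have he : (fun x => f x * g x) = fun x => (1/4) * (Vpot x * f x) + c₂ * f x := by
      funext x; simp only [hg]; ring
    rw [he]
    exact (hVf.const_mul _).add (hint.const_mul _)
  -- a.e. nonnegativity on the product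
  have hpos2 : ∀ᵐ p : E2 × E2, 0 ≤ f p.1 ∧ 0 ≤ f p.2 := by
    rw [Measure.volume_eq_prod]
    exact (Measure.quasiMeasurePreserving_fst.ae hpos).and
      (Measure.quasiMeasurePreserving_snd.ae hpos)
  -- integrability of the interaction term
  have hI3int : Integrable (fun p : E2 × E2 => f p.1 * f p.2 * Real.log ‖p.1 - p.2‖) := by
    refine hprod.mono' ?_ ?_
    · exact (((hmeas.comp measurable_fst).mul (hmeas.comp measurable_snd)).mul
        (Real.measurable_log.comp ((measurable_fst.sub measurable_snd).norm))).aestronglyMeasurable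
    · filter_upwards [hpos2] with p hp
      rw [Real.norm_eq_abs, abs_mul, abs_mul, abs_of_nonneg hp.1, abs_of_nonneg hp.2]
  have hRHS : Integrable (fun p : E2 × E2 => f p.1 * f p.2 * (g p.1 + g p.2)) := by
    have he : (fun p : E2 × E2 => f p.1 * f p.2 * (g p.1 + g p.2))
        = fun p : E2 × E2 => (fun x => f x * g x) p.1 * f p.2
            + f p.1 * ((fun x => f x * g x) p.2) := by
      funext p; ring
    rw [he]
    exact (hfg.mul_prod hint).add (hint.mul_prod hfg)
  -- Step A : bound the interaction term
  have hI3le : (∫ p : E2 × E2, f p.1 * f p.2 * Real.log ‖p.1 - p.2‖)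
      ≤ 2 * M * ((1/4) * (∫ x, Vpot x * f x) + c₂ * M) := by
    have hmono : (∫ p : E2 × E2, f p.1 * f p.2 * Real.log ‖p.1 - p.2‖)
        ≤ ∫ p : E2 × E2, f p.1 * f p.2 * (g p.1 + g p.2) := by
      refine integral_mono_ae hI3int hRHS ?_
      filter_upwards [hpos2] with p hp
      refine mul_le_mul_of_nonneg_left ?_ (mul_nonneg hp.1 hp.2)
      have h1 := log_sub_le p.1 p.2
      have h2 := log_one_add_norm_le p.1
      have h3 := log_one_add_norm_le p.2
      simp only [hg]
      linarith
    have hsplit : (∫ p : E2 × E2, f p.1 * f p.2 * (g p.1 + g p.2))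
        = (∫ x, f x * g x) * (∫ x, f x) + (∫ x, f x) * (∫ x, f x * g x) := by
      rw [Measure.volume_eq_prod]
      rw [show (fun p : E2 × E2 => f p.1 * f p.2 * (g p.1 + g p.2))
          = (fun p : E2 × E2 => (fun x => f x * g x) p.1 * f p.2
              + f p.1 * ((fun x => f x * g x) p.2)) from funext fun p => by ring]
      rw [integral_add (hfg.mul_prod hint) (hint.mul_prod hfg)]
      have e1 : (∫ a : E2 × E2, f a.1 * g a.1 * f a.2
            ∂(volume : Measure E2).prod volume)
          = (∫ x, f x * g x) * ∫ x, f x := integral_prod_mul (fun x => f x * g x) f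
      have e2 : (∫ a : E2 × E2, f a.1 * (f a.2 * g a.2)
            ∂(volume : Measure E2).prod volume)
          = (∫ x, f x) * ∫ x, f x * g x := integral_prod_mul f (fun x => f x * g x)
      rw [e1, e2]
    have hfg_val : (∫ x, f x * g x) = (1/4) * (∫ x, Vpot x * f x) + c₂ * M := by
      rw [← hmass, ← integral_const_mul, ← integral_const_mul,
        ← integral_add (hVf.const_mul _) (hint.const_mul _)]
      congr 1; funext x; simp only [hg]; ring
    rw [hsplit, hfg_val, hmass] at hmono
    linarith
  -- nonnegativity of the potential term
  have hI2 : 0 ≤ ∫ x, Vpot x * f x := by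
    refine integral_nonneg_of_ae ?_
    filter_upwards [hpos] with x hx
    exact mul_nonneg (Vpot_nonneg x) hx
  -- Step C : entropy lower bound
  have hC : M - (∫ x, mu2 x) ≤ (∫ x, f x * Real.log (f x)) + ∫ x, Vpot x * f x := by
    have hadd : (∫ x, f x * Real.log (f x)) + (∫ x, Vpot x * f x)
        = ∫ x, (f x * Real.log (f x) + Vpot x * f x) := (integral_add hfl hVf).symm
    have hsub : M - (∫ x, mu2 x) = ∫ x, (f x - mu2 x) := by
      rw [integral_sub hint mu2_integrable, hmass]
    rw [hadd, hsub]
    refine integral_mono_ae (hint.sub mu2_integrable) (hfl.add hVf) ?_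
    filter_upwards [hpos] with x hx
    have h1 := mul_log_ge (f x) (mu2 x) hx (mu2_pos x)
    rw [log_mu2 x] at h1
    nlinarith
  -- final assembly
  unfold Fplus
  set I1 := ∫ x, f x * Real.log (f x)
  set I2 := ∫ x, Vpot x * f x
  set I3 := ∫ p : E2 × E2, f p.1 * f p.2 * Real.log ‖p.1 - p.2‖
  have h4π : (0:ℝ) < 1/(4*π) := by positivity
  have hmul := mul_le_mul_of_nonneg_left hI3le h4π.le
  have heq : 1/(4*π) * (2 * M * ((1/4) * I2 + c₂ * M))
      = M/(8*π) * I2 + 1/(2*π) * c₂ * M^2 := by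
    field_simp; ring
  rw [heq] at hmul
  have hβI2 : (1 + M/(8*π)) * I2 ≤ β * I2 := mul_le_mul_of_nonneg_right hβ hI2
  nlinarith [hmul, hβI2, hC]
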